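/- Let A_t and A_s be formal deformations of a finite-dimensional associative algebra A with multiplications α_t = μ₀ + tF₁ + t²F₂ + ... and β_s = μ₀ + sH₁ + s²H₂ + .... If A_t and A_s are compatible (jointly extendable to an associative two-parameter family μ₀ + tF₁ + sH₁ + higher order terms in t,s), then the Gerstenhaber bracket [F₁,H₁]_G is a Hochschild 3-coboundary, i.e., the class [f,h]_G = 0 in H³(A,A). -/

import Mathlib

/-- Gerstenhaber–Giaquinto compatibility criterion: if two formal
deformations of `(A, m₀)` with infinitesimals `F₁`, `H₁` are compatible,
i.e. jointly extendable to an associative two-parameter family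
`μ₀ + t F₁ + s H₁ + (higher order in t, s)`, then the Gerstenhaber bracket
`[F₁,H₁]_G` is a Hochschild 3-coboundary, i.e. `[f,h]_G = 0` in `H³(A,A)`. -/
theorem stmt_18 {K A : Type*} [Field K] [AddCommGroup A] [Module K A]
    (m₀ F₁ H₁ : A →ₗ[K] A →ₗ[K] A)
    (hassoc : ∀ x y z : A, m₀ (m₀ x y) z = m₀ x (m₀ y z))
    (hF : ∀ x y z : A,
      m₀ x (F₁ y z) - F₁ (m₀ x y) z + F₁ x (m₀ y z) - m₀ (F₁ x y) z = 0)
    (hH : ∀ x y z : A,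
      m₀ x (H₁ y z) - H₁ (m₀ x y) z + H₁ x (m₀ y z) - m₀ (H₁ x y) z = 0)
    (hcompat : ∃ μ : ℕ → ℕ → A →ₗ[K] A →ₗ[K] A,
      μ 0 0 = m₀ ∧ μ 1 0 = F₁ ∧ μ 0 1 = H₁ ∧
      ∀ (k l : ℕ) (x y z : A),
        ∑ p ∈ Finset.HasAntidiagonal.antidiagonal k, ∑ q ∈ Finset.HasAntidiagonal.antidiagonal l,
          (μ p.1 q.1 (μ p.2 q.2 x y) z - μ p.1 q.1 x (μ p.2 q.2 y z)) = 0) :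
    ∃ ν : A →ₗ[K] A →ₗ[K] A, ∀ x y z : A,
      F₁ (H₁ x y) z - F₁ x (H₁ y z) + H₁ (F₁ x y) z - H₁ x (F₁ y z) =
        m₀ x (ν y z) - ν (m₀ x y) z + ν x (m₀ y z) - m₀ (ν x y) z := by
  obtain ⟨μ, h00, h10, h01, heq⟩ := hcompat
  refine ⟨μ 1 1, fun x y z => ?_⟩
  have h := heq 1 1 x y z
  have had : Finset.HasAntidiagonal.antidiagonal 1 = {((0:ℕ),(1:ℕ)), (1,0)} := by decide
  rw [had] at h
  have hne : ((0:ℕ),(1:ℕ)) ∉ ({(1,0)} : Finset (ℕ × ℕ)) := by decide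
  simp only [Finset.sum_insert hne, Finset.sum_singleton, h00, h10, h01] at h
  linear_combination (norm := abel) h
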